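/- Under the setting of the constraint decomposition, if x ∈ X and v ∈ ℝ satisfy (x,v) ∈ Z, then defining u = (b₀v − αᵀx)/(β g(x)) when g(x) ≠ 0 and u = 0 when g(x) = 0, one has u ∈ [u̲, u̅] and b₀v = β g(x) u + αᵀx. -/

import Mathlib

open Matrix Finset

theorem stmt_4 {n s : ℕ} (g : (Fin n → ℝ) → ℝ) (X : Fin s → Set (Fin n → ℝ))
    (β b₀ : ℝ) (hβ : β ≠ 0) (hb₀ : b₀ ≠ 0) (α : Fin n → ℝ)
    (ul uu : ℝ) (hul : ul < 0) (huu : 0 < uu)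
    (σ : Fin s → Bool)
    (hσpos : ∀ i, σ i = true → ∀ x ∈ X i, 0 ≤ β * g x)
    (hσneg : ∀ i, σ i = false → ∀ x ∈ X i, β * g x ≤ 0)
    (Z : Fin s → Set ((Fin n → ℝ) × ℝ))
    (hZ : ∀ i, Z i = {p | p.1 ∈ X i ∧
      b₀ * p.2 - ∑ j, α j * p.1 j ∈
        (if σ i then Set.Icc (β * g p.1 * ul) (β * g p.1 * uu)
         else Set.Icc (β * g p.1 * uu) (β * g p.1 * ul))})
    (x : Fin n → ℝ) (hx : x ∈ ⋃ i, X i) (v : ℝ) (hxv : (x, v) ∈ ⋃ i, Z i) :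
    (if g x ≠ 0 then (b₀ * v - ∑ j, α j * x j) / (β * g x) else 0) ∈ Set.Icc ul uu ∧
    b₀ * v = β * g x * (if g x ≠ 0 then (b₀ * v - ∑ j, α j * x j) / (β * g x) else 0)
      + ∑ j, α j * x j := by
  obtain ⟨_, ⟨i, rfl⟩, hmem⟩ := hxv
  simp only [hZ] at hmem
  obtain ⟨hxXi, hval⟩ := hmem
  by_cases hg : g x = 0
  · have h0 : b₀ * v - ∑ j, α j * x j = 0 := by
      split_ifs at hval <;> simpa [hg] using hval
    simp only [hg, ne_eq, not_true_eq_false, if_false]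
    constructor
    · exact ⟨le_of_lt hul, le_of_lt huu⟩
    · linarith
  · have hβg : β * g x ≠ 0 := mul_ne_zero hβ hg
    simp only [ne_eq, hg, not_false_eq_true, if_true]
    constructor
    · cases hσ : σ i with
      | true =>
        have hpos : 0 ≤ β * g x := hσpos i hσ x hxXi
        have hpos' : 0 < β * g x := lt_of_le_of_ne hpos (Ne.symm hβg)
        rw [hσ] at hval
        simp only [if_true] at hval
        constructor
        · rw [le_div_iff₀ hpos']; linarith [hval.1]
        · rw [div_le_iff₀ hpos']; linarith [hval.2]
      | false =>
        have hneg : β * g x ≤ 0 := hσneg i hσ x hxXi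
        have hneg' : β * g x < 0 := lt_of_le_of_ne hneg hβg
        rw [hσ] at hval
        simp only [if_false] at hval
        constructor
        · rw [le_div_iff_of_neg hneg']; linarith [hval.2]
        · rw [div_le_iff_of_neg hneg']; linarith [hval.1]
    · field_simp
      ring
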